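/- Let X and Y be Banach spaces and let W1 ⊆ X, W2 ⊆ Y be nonempty sets with W1 ≠ {0} and W2 ≠ {0}. If the set W1 ⊗ W2 := {x ⊗ y : x ∈ W1, y ∈ W2} is relatively weakly compact in the projective tensor product X ⊗̂π Y, then both W1 and W2 are relatively weakly compact. -/

import Mathlib

open Filter Topology NormedSpace
open scoped ENNReal NNReal

/-- `Z`, together with the continuous bilinear map `m`, is (a realization of) the projective
tensor product `X ⊗̂π Y`: the span of elementary tensors is dense, and every continuous bilinear
map into a Banach space lifts to a continuous linear map on `Z` with the same norm. -/
structure IsProjTensorProduct (X Y Z : Type*) [NormedAddCommGroup X] [NormedSpace ℝ X]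
    [NormedAddCommGroup Y] [NormedSpace ℝ Y] [NormedAddCommGroup Z] [NormedSpace ℝ Z]
    (m : X →L[ℝ] Y →L[ℝ] Z) : Prop where
  dense_span : Dense (Submodule.span ℝ {z : Z | ∃ x y, m x y = z} : Set Z)
  lift : ∀ (W : Type) [NormedAddCommGroup W] [NormedSpace ℝ W] [CompleteSpace W]
    (B : X →L[ℝ] Y →L[ℝ] W), ∃ T : Z →L[ℝ] W, ‖T‖ = ‖B‖ ∧ ∀ x y, T (m x y) = B x y

/-- A set is relatively weakly compact if its closure in the weak topology is weakly compact. -/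
def RelWeakCompact (X : Type*) [SeminormedAddCommGroup X] [NormedSpace ℝ X] (A : Set X) : Prop :=
  IsCompact (closure ((toWeakSpace ℝ X) '' A))

/-- A set is relatively norm compact if its norm closure is compact. -/
def RelNormCompact (X : Type*) [SeminormedAddCommGroup X] [NormedSpace ℝ X] (A : Set X) : Prop :=
  IsCompact (closure A)

/-- A sequence is weakly Cauchy if every continuous functional sends it to a convergent sequence. -/
def WeaklyCauchySeq {X : Type*} [SeminormedAddCommGroup X] [NormedSpace ℝ X] (x : ℕ → X) : Prop :=
  ∀ f : X →L[ℝ] ℝ, ∃ l : ℝ, Tendsto (fun n => f (x n)) atTop (nhds l)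

/-- A sequence is weakly null if it converges to `0` in the weak topology. -/
def WeaklyNullSeq {X : Type*} [SeminormedAddCommGroup X] [NormedSpace ℝ X] (x : ℕ → X) : Prop :=
  ∀ f : X →L[ℝ] ℝ, Tendsto (fun n => f (x n)) atTop (nhds 0)

/-- A set is weakly precompact if every sequence in it has a weakly Cauchy subsequence. -/
def WeaklyPrecompact {X : Type*} [SeminormedAddCommGroup X] [NormedSpace ℝ X] (A : Set X) : Prop :=
  ∀ x : ℕ → X, (∀ n, x n ∈ A) → ∃ φ : ℕ → ℕ, StrictMono φ ∧ WeaklyCauchySeq (x ∘ φ)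

/-- A (weakly) compact operator maps the closed unit ball to a relatively (weakly) compact set. -/
def WeaklyCompactOp {X Y : Type*} [SeminormedAddCommGroup X] [NormedSpace ℝ X]
    [SeminormedAddCommGroup Y] [NormedSpace ℝ Y] (T : X →L[ℝ] Y) : Prop :=
  RelWeakCompact Y (T '' Metric.closedBall 0 1)


lemma weak_t2 (X : Type*) [NormedAddCommGroup X] [NormedSpace ℝ X] :
    T2Space (WeakSpace ℝ X) := by
  constructor
  intro a b hab
  set a' := (toWeakSpace ℝ X).symm a
  set b' := (toWeakSpace ℝ X).symm b
  have hne : a' - b' ≠ 0 := by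
    intro hc
    exact hab ((toWeakSpace ℝ X).symm.injective (sub_eq_zero.mp hc))
  obtain ⟨f, -, hf⟩ := exists_dual_vector ℝ _ (norm_ne_zero_iff.mpr hne)
  have hcont : Continuous fun x : WeakSpace ℝ X => f ((toWeakSpace ℝ X).symm x) :=
    WeakBilin.eval_continuous (topDualPairing ℝ X).flip f
  have hfa : f a' ≠ f b' := by
    intro hc
    have h0 : f (a' - b') = 0 := by rw [map_sub, hc, sub_self]
    rw [hf] at h0
    exact hne (by simpa [norm_eq_zero] using h0)
  exact separated_by_continuous hcont hfa

lemma aux_half {X Y Z : Type*} [NormedAddCommGroup X] [NormedSpace ℝ X] [CompleteSpace X]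
    [NormedAddCommGroup Y] [NormedSpace ℝ Y]
    [NormedAddCommGroup Z] [NormedSpace ℝ Z]
    (m : X →L[ℝ] Y →L[ℝ] Z)
    (lift : ∀ B : X →L[ℝ] Y →L[ℝ] ℝ, ∃ T : Z →L[ℝ] ℝ, ‖T‖ = ‖B‖ ∧ ∀ x y, T (m x y) = B x y)
    (W1 : Set X) (W2 : Set Y) (hy0 : ∃ y0 ∈ W2, y0 ≠ (0 : Y))
    (h : IsCompact (closure ((toWeakSpace ℝ Z) '' Set.image2 (fun x y => m x y) W1 W2))) :
    IsCompact (closure ((toWeakSpace ℝ X) '' W1)) := by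
  have _ : T2Space (WeakSpace ℝ X) := weak_t2 X
  obtain ⟨y0, hy0W, hy0⟩ := hy0
  obtain ⟨g, hg1, hg2⟩ := exists_dual_vector ℝ y0 (norm_ne_zero_iff.mpr hy0)
  set f : Y →L[ℝ] ℝ := (‖y0‖⁻¹ : ℝ) • g with hf_def
  have hf : f y0 = 1 := by
    simp only [hf_def, ContinuousLinearMap.smul_apply, hg2]
    simp [inv_mul_cancel₀ (norm_ne_zero_iff.mpr hy0)]
  set J : X →L[ℝ] Z := m.flip y0 with hJ_def
  have hJ : ∀ x, J x = m x y0 := fun x => rfl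
  choose Φ hΦnorm hΦ using fun l : X →L[ℝ] ℝ => lift (l.smulRight f)
  have hΦJ : ∀ (l : X →L[ℝ] ℝ) (x : X), Φ l (J x) = l x := by
    intro l x
    rw [hJ, hΦ l x y0]
    simp [hf]
  -- lower bound for J
  have hlow : ∀ x : X, ‖x‖ ≤ ‖f‖ * ‖J x‖ := by
    intro x
    obtain ⟨l, hl1, hl2⟩ := exists_dual_vector'' ℝ x
    calc ‖x‖ = ‖l x‖ := by rw [hl2]; simp
    _ = ‖Φ l (J x)‖ := by rw [hΦJ]
    _ ≤ ‖Φ l‖ * ‖J x‖ := (Φ l).le_opNorm _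
    _ ≤ ‖f‖ * ‖J x‖ := by
        apply mul_le_mul_of_nonneg_right _ (norm_nonneg _)
        rw [hΦnorm, ContinuousLinearMap.norm_smulRight_apply]
        calc ‖l‖ * ‖f‖ ≤ 1 * ‖f‖ := mul_le_mul_of_nonneg_right hl1 (norm_nonneg _)
        _ = ‖f‖ := one_mul _
  have hanti : AntilipschitzWith ‖f‖₊ J := J.antilipschitz_of_bound hlow
  have hJinj : Function.Injective J := hanti.injective
  -- range of J is norm-closed, hence weakly closed (Mazur)
  have hclosed : IsClosed (Set.range J) := hanti.isClosed_range J.uniformContinuous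
  have hconv : Convex ℝ (Set.range J) := by
    have : (Set.range J) = (LinearMap.range (J : X →ₗ[ℝ] Z) : Submodule ℝ Z) := by
      ext z; simp [LinearMap.mem_range]
    rw [this]
    exact (LinearMap.range (J : X →ₗ[ℝ] Z) : Submodule ℝ Z).convex
  have hweakclosed : IsClosed ((toWeakSpace ℝ Z) '' Set.range J) := by
    have := hconv.toWeakSpace_closure ℝ (s := Set.range J)
    rw [hclosed.closure_eq] at this
    exact isClosed_of_closure_subset (by rw [← this])
  -- the compact set
  set K' := closure ((toWeakSpace ℝ Z) '' Set.image2 (fun x y => m x y) W1 W2) ∩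
      ((toWeakSpace ℝ Z) '' Set.range J) with hK'_def
  have hK' : IsCompact K' := h.inter_right hweakclosed
  -- inverse map on K'
  have hzex : ∀ z : K', ∃ x : X, toWeakSpace ℝ Z (J x) = z.val := by
    rintro ⟨z, -, ⟨w, ⟨x, rfl⟩, hw⟩⟩
    exact ⟨x, hw⟩
  choose R hR using hzex
  have hkey : ∀ (l : X →L[ℝ] ℝ) (z : K'),
      l (R z) = Φ l ((toWeakSpace ℝ Z).symm z.val) := by
    intro l z
    rw [← hR z]
    have : (toWeakSpace ℝ Z).symm (toWeakSpace ℝ Z (J (R z))) = J (R z) :=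
      (toWeakSpace ℝ Z).symm_apply_apply _
    rw [this, hΦJ]
  have hRcont : Continuous (fun z : K' => toWeakSpace ℝ X (R z)) := by
    apply WeakBilin.continuous_of_continuous_eval
    intro l
    have heq : (fun z : K' => (topDualPairing ℝ X).flip (toWeakSpace ℝ X (R z)) l)
        = fun z : K' => Φ l ((toWeakSpace ℝ Z).symm z.val) := by
      funext z
      exact hkey l z
    rw [heq]
    exact (WeakBilin.eval_continuous (topDualPairing ℝ Z).flip (Φ l)).comp
      continuous_subtype_val
  have : CompactSpace K' := isCompact_iff_compactSpace.mp hK'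
  have hKcomp : IsCompact (Set.range (fun z : K' => toWeakSpace ℝ X (R z))) :=
    isCompact_range hRcont
  have hsub : (toWeakSpace ℝ X) '' W1 ⊆ Set.range (fun z : K' => toWeakSpace ℝ X (R z)) := by
    rintro _ ⟨x, hx, rfl⟩
    have hmem : toWeakSpace ℝ Z (J x) ∈ K' := by
      constructor
      · exact subset_closure ⟨m x y0, Set.mem_image2_of_mem hx hy0W, rfl⟩
      · exact ⟨J x, ⟨x, rfl⟩, rfl⟩
    refine ⟨⟨_, hmem⟩, ?_⟩
    have := hR ⟨_, hmem⟩
    have hx' : J (R ⟨_, hmem⟩) = J x := (toWeakSpace ℝ Z).injective this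
    exact congrArg _ (hJinj hx')
  exact hKcomp.of_isClosed_subset isClosed_closure
    (closure_minimal hsub hKcomp.isClosed)

theorem stmt0 {X Y Z : Type*} [NormedAddCommGroup X] [NormedSpace ℝ X] [CompleteSpace X] [NormedAddCommGroup Y] [NormedSpace ℝ Y] [CompleteSpace Y] [NormedAddCommGroup Z] [NormedSpace ℝ Z] [CompleteSpace Z]
    (m : X →L[ℝ] Y →L[ℝ] Z) (hm : IsProjTensorProduct X Y Z m)
    (W1 : Set X) (W2 : Set Y) (hW1 : W1.Nonempty) (hW2 : W2.Nonempty)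
    (hW1' : W1 ≠ {0}) (hW2' : W2 ≠ {0})
    (h : RelWeakCompact Z (Set.image2 (fun x y => m x y) W1 W2)) :
    RelWeakCompact X W1 ∧ RelWeakCompact Y W2 := by
  have hx0 : ∃ x0 ∈ W1, x0 ≠ (0 : X) := by
    by_contra hc
    push_neg at hc
    exact hW1' (Set.eq_singleton_iff_nonempty_unique_mem.mpr ⟨hW1, fun x hx => hc x hx⟩)
  have hy0 : ∃ y0 ∈ W2, y0 ≠ (0 : Y) := by
    by_contra hc
    push_neg at hc
    exact hW2' (Set.eq_singleton_iff_nonempty_unique_mem.mpr ⟨hW2, fun y hy => hc y hy⟩)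
  constructor
  · exact aux_half m (fun B => hm.lift ℝ B) W1 W2 hy0 h
  · have hlift : ∀ B : Y →L[ℝ] X →L[ℝ] ℝ, ∃ T : Z →L[ℝ] ℝ,
        ‖T‖ = ‖B‖ ∧ ∀ y x, T (m.flip y x) = B y x := by
      intro B
      obtain ⟨T, hT1, hT2⟩ := hm.lift ℝ B.flip
      refine ⟨T, ?_, fun y x => ?_⟩
      · rw [hT1, B.opNorm_flip]
      · rw [ContinuousLinearMap.flip_apply, hT2]
        rfl
    have h' : IsCompact (closure ((toWeakSpace ℝ Z) ''
        Set.image2 (fun y x => m.flip y x) W2 W1)) := by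
      have : Set.image2 (fun y x => m.flip y x) W2 W1
          = Set.image2 (fun x y => m x y) W1 W2 := by
        rw [Set.image2_swap]
        rfl
      rw [this]
      exact h
    exact aux_half m.flip hlift W2 W1 hx0 h'
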